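/- Let (S_k) be a simple random walk with i.i.d. increments uniform on {−1,+1} started at 0. There exists a finite constant c such that for every n and every event A measurable with respect to (S_0,...,S_{n+1}), P(A | S_{2n+1} = −1) ≤ c·P(A). -/

import Mathlib

open MeasureTheory ProbabilityTheory

set_option linter.unusedSectionVars false
set_option linter.unusedVariables false

open MeasureTheory ProbabilityTheory

lemma bcb_symm (n : ℕ) : Nat.choose (2*n+1) (n+1) = Nat.choose (2*n+1) n := by
  have h := Nat.choose_symm (show n+1 ≤ 2*n+1 by omega)
  rw [show 2*n+1-(n+1) = n by omega] at h
  exact h.symm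

-- (n+2) * C(2n+3, n+1) = 2*(2n+3)*C(2n+1, n)
lemma bcb_id1 (n : ℕ) :
    (n+2) * Nat.choose (2*n+3) (n+1) = 2*(2*n+3) * Nat.choose (2*n+1) n := by
  have hA : Nat.choose (2*n+2) (n+1) = 2 * Nat.choose (2*n+1) n := by
    rw [show 2*n+2 = (2*n+1)+1 by ring, Nat.choose_succ_succ, bcb_symm]; ring
  have hB : Nat.choose (2*n+3) (n+1) = Nat.choose (2*n+2) n + Nat.choose (2*n+2) (n+1) := by
    rw [show 2*n+3 = (2*n+2)+1 by ring, Nat.choose_succ_succ]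
  have hC : Nat.choose (2*n+2) (n+1) * (n+1) = Nat.choose (2*n+2) n * (n+2) := by
    have := Nat.choose_succ_right_eq (2*n+2) n
    rw [show 2*n+2-n = n+2 by omega] at this
    exact this
  nlinarith [hA, hB, hC]

-- (m+1) * C(2m+1, m) = (2m+1) * C(2m, m)
lemma bcb_id2 (m : ℕ) :
    (m+1) * Nat.choose (2*m+1) m = (2*m+1) * Nat.choose (2*m) m := by
  have h := Nat.add_one_mul_choose_eq (2*m) m
  rw [show (2*m)+1 = 2*m+1 by rfl] at h
  rw [bcb_symm] at h
  linarith

-- (m+1) * C(2m+2, m+1) = 2*(2m+1) * C(2m, m)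
lemma bcb_id3 (m : ℕ) :
    (m+1) * Nat.choose (2*m+2) (m+1) = 2*(2*m+1) * Nat.choose (2*m) m := by
  have hA : Nat.choose (2*m+2) (m+1) = 2 * Nat.choose (2*m+1) m := by
    rw [show 2*m+2 = (2*m+1)+1 by ring, Nat.choose_succ_succ, bcb_symm]; ring
  have h2 := bcb_id2 m
  nlinarith [hA, h2]

lemma bcb_even : ∀ m : ℕ, 4^m * Nat.choose (2*m) m ≤ Nat.choose (4*m+1) (2*m)
  | 0 => by decide
  | (m+1) => by
    have IH := bcb_even m
    have h3 := bcb_id3 m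
    have h1 := bcb_id1 (2*m)
    have h2 := bcb_id1 (2*m+1)
    rw [show 2*(2*m)+3 = 4*m+3 from by ring, show 2*(2*m)+1 = 4*m+1 from by ring] at h1
    rw [show 2*(2*m+1)+3 = 4*m+5 from by ring, show 2*(2*m+1)+1 = 4*m+3 from by ring,
      show (2*m+1)+2 = 2*m+3 from by ring, show (2*m+1)+1 = 2*m+2 from by ring] at h2
    rw [show 2*(m+1) = 2*m+2 from by ring, show 4*(m+1)+1 = 4*m+5 from by ring, pow_succ]
    set p := (4:ℕ)^m with hp
    set a := Nat.choose (4*m+1) (2*m) with ha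
    set b := Nat.choose (4*m+3) (2*m+1) with hb
    set c := Nat.choose (4*m+5) (2*m+2) with hcdef
    set d := Nat.choose (2*m) m with hd
    set e := Nat.choose (2*m+2) (m+1) with he
    -- h1 : (2*m+2)*b = 2*(4*m+3)*a ; h2 : (2*m+3)*c = 2*(4*m+5)*b
    have hc : (2*m+2)*((2*m+3)*c) = (4*(4*m+3)*(4*m+5))*a := by
      rw [h2]
      calc (2*m+2)*(2*(4*m+5)*b) = (2*(4*m+5))*((2*m+2)*b) := by ring
        _ = (2*(4*m+5))*(2*(4*m+3)*a) := by rw [h1]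
        _ = (4*(4*m+3)*(4*m+5))*a := by ring
    have hpos : 0 < (m+1)*((2*m+2)*(2*m+3)) := by positivity
    apply Nat.le_of_mul_le_mul_left _ hpos
    calc ((m+1)*((2*m+2)*(2*m+3))) * (p*4*e)
        = (2*m+2)*(2*m+3)*(4*p)*((m+1)*e) := by ring
      _ = (2*m+2)*(2*m+3)*(4*p)*(2*(2*m+1)*d) := by rw [h3]
      _ = (8*(2*m+1)*(2*m+2)*(2*m+3))*(p*d) := by ring
      _ ≤ (8*(2*m+1)*(2*m+2)*(2*m+3))*a := Nat.mul_le_mul_left _ IH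
      _ ≤ ((m+1)*(4*(4*m+3)*(4*m+5)))*a := Nat.mul_le_mul_right _ (by nlinarith)
      _ = (m+1)*((2*m+2)*((2*m+3)*c)) := by rw [hc]; ring
      _ = ((m+1)*((2*m+2)*(2*m+3)))*c := by ring

lemma bcb_key (n : ℕ) : 2^n * Nat.choose n (n/2) ≤ Nat.choose (2*n+1) n := by
  rcases Nat.even_or_odd n with ⟨m, rfl⟩ | ⟨m, rfl⟩
  · rw [show m+m = 2*m from by ring]
    rw [show (2*m)/2 = m from by omega, show 2*(2*m)+1 = 4*m+1 from by ring,
      show (2:ℕ)^(2*m) = 4^m from by rw [pow_mul]; norm_num]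
    exact bcb_even m
  · -- n = 2m+1
    rw [show (2*m+1)/2 = m from by omega, show 2*(2*m+1)+1 = 4*m+3 from by ring]
    have IH := bcb_even m
    have h1 := bcb_id1 (2*m)
    rw [show 2*(2*m)+3 = 4*m+3 from by ring, show 2*(2*m)+1 = 4*m+1 from by ring] at h1
    have h2 := bcb_id2 m
    have hpow : (2:ℕ)^(2*m+1) = 2*4^m := by rw [pow_succ, pow_mul]; norm_num; ring
    rw [hpow]
    set p := (4:ℕ)^m with hp
    set a := Nat.choose (4*m+1) (2*m) with ha
    set b := Nat.choose (4*m+3) (2*m+1) with hb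
    set d := Nat.choose (2*m) m with hd
    set q := Nat.choose (2*m+1) m with hq
    -- goal : 2*p*q ≤ b ; h1 : (2*m+2)*b = 2*(4*m+3)*a ; h2 : (m+1)*q = (2*m+1)*d
    have hpos : 0 < (m+1)*(2*m+2) := by positivity
    apply Nat.le_of_mul_le_mul_left _ hpos
    calc ((m+1)*(2*m+2)) * (2*p*q)
        = (2*m+2)*(2*p)*((m+1)*q) := by ring
      _ = (2*m+2)*(2*p)*((2*m+1)*d) := by rw [h2]
      _ = (2*(2*m+1)*(2*m+2))*(p*d) := by ring
      _ ≤ (2*(2*m+1)*(2*m+2))*a := Nat.mul_le_mul_left _ IH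
      _ ≤ ((m+1)*(2*(4*m+3)))*a := Nat.mul_le_mul_right _ (by nlinarith)
      _ = (m+1)*((2*m+2)*b) := by rw [h1]; ring
      _ = ((m+1)*(2*m+2))*b := by ring


section RW

variable {Ω : Type*} [MeasurableSpace Ω] (μ : Measure Ω) [IsProbabilityMeasure μ]
  (X : ℕ → Ω → ℤ)

/-- the event that `X i = 1` exactly for `i ∈ t`, among indices in `s`. -/
def patt (s t : Finset ℕ) : Set Ω :=
  ⋂ i ∈ s, {ω | X i ω = if i ∈ t then 1 else -1}

lemma patt_meas (hmeas : ∀ i, Measurable (X i)) (s t : Finset ℕ) :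
    MeasurableSet (patt X s t) :=
  MeasurableSet.biInter s.countable_toSet
    (fun i _ => hmeas i (measurableSet_singleton _))

lemma meas_patt (hmeas : ∀ i, Measurable (X i))
    (hindep : iIndepFun X μ)
    (hup : ∀ i, μ {ω | X i ω = 1} = 1/2)
    (hdown : ∀ i, μ {ω | X i ω = -1} = 1/2)
    (s t : Finset ℕ) :
    μ (patt X s t) = (2:ENNReal)⁻¹ ^ s.card := by
  have h := hindep.meas_biInter (S := s)
    (s := fun i => {ω | X i ω = if i ∈ t then 1 else -1})
    (fun i _ => ⟨{if i ∈ t then 1 else -1}, measurableSet_singleton _, rfl⟩)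
  rw [patt, h]
  have : ∀ i ∈ s, μ {ω | X i ω = if i ∈ t then 1 else -1} = (2:ENNReal)⁻¹ := by
    intro i _
    by_cases hi : i ∈ t <;> simp only [hi, if_true, if_false]
    · rw [hup i, one_div]
    · rw [hdown i, one_div]
  rw [Finset.prod_congr rfl this, Finset.prod_const]

lemma patt_disjoint (s t t' : Finset ℕ) (ht : t ⊆ s) (ht' : t' ⊆ s) (hne : t ≠ t') :
    Disjoint (patt X s t) (patt X s t') := by
  have : ∃ i, ¬ (i ∈ t ↔ i ∈ t') := by
    by_contra h
    push_neg at h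
    exact hne (Finset.ext_iff.mpr fun i => h i)
  obtain ⟨i, hi⟩ := this
  have his : i ∈ s := by
    by_cases h1 : i ∈ t
    · exact ht h1
    · by_cases h2 : i ∈ t'
      · exact ht' h2
      · exact absurd (iff_of_false h1 h2) hi
  rw [Set.disjoint_left]
  intro ω hω hω'
  have e1 : X i ω = if i ∈ t then 1 else -1 := Set.mem_iInter₂.mp hω i his
  have e2 : X i ω = if i ∈ t' then 1 else -1 := Set.mem_iInter₂.mp hω' i his
  by_cases h1 : i ∈ t <;> by_cases h2 : i ∈ t' <;>
    simp [h1, h2] at e1 e2 hi <;> omega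

lemma sum_patt (s t : Finset ℕ) (ht : t ⊆ s) (ω : Ω) (hω : ω ∈ patt X s t) :
    (∑ i ∈ s, X i ω) = 2 * (t.card : ℤ) - s.card := by
  classical
  have hmem : ∀ i ∈ s, X i ω = if i ∈ t then 1 else -1 :=
    fun i hi => Set.mem_iInter₂.mp hω i hi
  rw [Finset.sum_congr rfl hmem, Finset.sum_ite, Finset.sum_const, Finset.sum_const]
  rw [Finset.filter_mem_eq_inter, Finset.inter_eq_right.mpr ht]
  rw [show Finset.filter (fun i => ¬ i ∈ t) s = s \ t from by
    ext i; simp [Finset.mem_sdiff]]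
  rw [Finset.card_sdiff_of_subset ht]
  have := Finset.card_le_card ht
  simp only [nsmul_eq_mul, mul_one, mul_neg_one]
  omega

lemma rw_lower (hmeas : ∀ i, Measurable (X i))
    (hindep : iIndepFun X μ)
    (hup : ∀ i, μ {ω | X i ω = 1} = 1/2)
    (hdown : ∀ i, μ {ω | X i ω = -1} = 1/2)
    (s : Finset ℕ) (k : ℕ) :
    (Nat.choose s.card k : ENNReal) * (2:ENNReal)⁻¹ ^ s.card
      ≤ μ {ω | (∑ i ∈ s, X i ω) = 2 * (k : ℤ) - s.card} := by
  classical
  have hdisj : (↑(Finset.powersetCard k s) : Set (Finset ℕ)).PairwiseDisjoint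
      (patt X s) := by
    intro t ht t' ht' hne
    simp only [Finset.coe_sort_coe, Finset.mem_coe, Finset.mem_powersetCard] at ht ht'
    exact patt_disjoint X s t t' ht.1 ht'.1 hne
  have hsub : ∀ t ∈ Finset.powersetCard k s,
      patt X s t ⊆ {ω | (∑ i ∈ s, X i ω) = 2 * (k : ℤ) - s.card} := by
    intro t ht ω hω
    obtain ⟨hts, htc⟩ := Finset.mem_powersetCard.mp ht
    have := sum_patt X s t hts ω hω
    simp only [Set.mem_setOf_eq, this, htc]
  calc (Nat.choose s.card k : ENNReal) * (2:ENNReal)⁻¹ ^ s.card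
      = (Finset.powersetCard k s).card * (2:ENNReal)⁻¹ ^ s.card := by
        rw [Finset.card_powersetCard]
    _ = ∑ _t ∈ Finset.powersetCard k s, (2:ENNReal)⁻¹ ^ s.card := by
        rw [Finset.sum_const, nsmul_eq_mul]
    _ = ∑ t ∈ Finset.powersetCard k s, μ (patt X s t) := by
        exact (Finset.sum_congr rfl fun t _ =>
          (meas_patt μ X hmeas hindep hup hdown s t)).symm
    _ = μ (⋃ t ∈ Finset.powersetCard k s, patt X s t) :=
        (measure_biUnion_finset hdisj (fun t _ => patt_meas X hmeas s t)).symm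
    _ ≤ μ {ω | (∑ i ∈ s, X i ω) = 2 * (k : ℤ) - s.card} :=
        measure_mono (Set.iUnion₂_subset hsub)

lemma bad_null (hmeas : ∀ i, Measurable (X i))
    (hup : ∀ i, μ {ω | X i ω = 1} = 1/2)
    (hdown : ∀ i, μ {ω | X i ω = -1} = 1/2) (i : ℕ) :
    μ {ω | ¬ (X i ω = 1 ∨ X i ω = -1)} = 0 := by
  have h1 : MeasurableSet {ω | X i ω = 1} := hmeas i (measurableSet_singleton _)
  have h2 : MeasurableSet {ω | X i ω = -1} := hmeas i (measurableSet_singleton _)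
  have hd : Disjoint {ω | X i ω = 1} {ω | X i ω = -1} := by
    rw [Set.disjoint_left]
    intro ω hω hω'
    simp only [Set.mem_setOf_eq] at hω hω'
    omega
  have hu : μ ({ω | X i ω = 1} ∪ {ω | X i ω = -1}) = 1 := by
    rw [measure_union hd h2, hup i, hdown i]
    exact ENNReal.add_halves 1
  have hset : {ω | ¬ (X i ω = 1 ∨ X i ω = -1)}
      = ({ω | X i ω = 1} ∪ {ω | X i ω = -1})ᶜ := by
    ext ω; simp [not_or]
  rw [hset, measure_compl (h1.union h2) (measure_ne_top μ _), hu, measure_univ, tsub_self]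

lemma rw_upper (hmeas : ∀ i, Measurable (X i))
    (hindep : iIndepFun X μ)
    (hup : ∀ i, μ {ω | X i ω = 1} = 1/2)
    (hdown : ∀ i, μ {ω | X i ω = -1} = 1/2)
    (s : Finset ℕ) (j : ℤ) :
    μ {ω | (∑ i ∈ s, X i ω) = j}
      ≤ (Nat.choose s.card (s.card / 2) : ENNReal) * (2:ENNReal)⁻¹ ^ s.card := by
  classical
  set F : Finset (Finset ℕ) :=
    (s.powerset).filter (fun t => 2 * (t.card : ℤ) - s.card = j) with hF
  set N : Set Ω := ⋃ i ∈ s, {ω | ¬ (X i ω = 1 ∨ X i ω = -1)} with hN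
  have hNnull : μ N = 0 := by
    refine (measure_biUnion_null_iff s.countable_toSet).mpr ?_
    intro i _
    exact bad_null μ X hmeas hup hdown i
  have hcov : {ω | (∑ i ∈ s, X i ω) = j} ⊆ (⋃ t ∈ F, patt X s t) ∪ N := by
    intro ω hω
    by_cases hbad : ∃ i ∈ s, ¬ (X i ω = 1 ∨ X i ω = -1)
    · right
      obtain ⟨i, hi, hb⟩ := hbad
      exact Set.mem_biUnion hi hb
    · left
      push_neg at hbad
      set t₀ : Finset ℕ := s.filter (fun i => X i ω = 1) with ht₀
      have hts : t₀ ⊆ s := Finset.filter_subset _ _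
      have hpat : ω ∈ patt X s t₀ := by
        refine Set.mem_iInter₂.mpr fun i hi => ?_
        by_cases h1 : X i ω = 1
        · have : i ∈ t₀ := Finset.mem_filter.mpr ⟨hi, h1⟩
          simp only [Set.mem_setOf_eq, this, if_true, h1]
        · have hni : i ∉ t₀ := fun hmem => h1 (Finset.mem_filter.mp hmem).2
          have := hbad i hi
          simp only [Set.mem_setOf_eq, hni, if_false]
          tauto
      have hsum := sum_patt X s t₀ hts ω hpat
      have htF : t₀ ∈ F := by
        rw [hF, Finset.mem_filter, Finset.mem_powerset]
        refine ⟨hts, ?_⟩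
        have hωj : (∑ i ∈ s, X i ω) = j := hω
        omega
      exact Set.mem_biUnion htF hpat
  have hFcard : F.card ≤ Nat.choose s.card (s.card / 2) := by
    rcases Finset.eq_empty_or_nonempty F with h | ⟨t₀, ht₀⟩
    · simp [h]
    · have ht₀' := Finset.mem_filter.mp ht₀
      have hsub : F ⊆ Finset.powersetCard t₀.card s := by
        intro t ht
        have ht' := Finset.mem_filter.mp ht
        rw [Finset.mem_powersetCard]
        refine ⟨Finset.mem_powerset.mp ht'.1, ?_⟩
        have e1 := ht'.2
        have e2 := ht₀'.2
        omega
      calc F.card ≤ (Finset.powersetCard t₀.card s).card := Finset.card_le_card hsub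
        _ = Nat.choose s.card t₀.card := by rw [Finset.card_powersetCard]
        _ ≤ Nat.choose s.card (s.card / 2) := Nat.choose_le_middle _ _
  calc μ {ω | (∑ i ∈ s, X i ω) = j}
      ≤ μ ((⋃ t ∈ F, patt X s t) ∪ N) := measure_mono hcov
    _ ≤ μ (⋃ t ∈ F, patt X s t) + μ N := measure_union_le _ _
    _ = μ (⋃ t ∈ F, patt X s t) := by rw [hNnull, add_zero]
    _ ≤ ∑ t ∈ F, μ (patt X s t) := measure_biUnion_finset_le _ _
    _ = ∑ _t ∈ F, (2:ENNReal)⁻¹ ^ s.card :=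
        Finset.sum_congr rfl fun t _ => meas_patt μ X hmeas hindep hup hdown s t
    _ = F.card * (2:ENNReal)⁻¹ ^ s.card := by rw [Finset.sum_const, nsmul_eq_mul]
    _ ≤ (Nat.choose s.card (s.card / 2) : ENNReal) * (2:ENNReal)⁻¹ ^ s.card := by
        exact mul_le_mul_left (by exact_mod_cast Nat.cast_le.mpr hFcard) _

end RW



/-- for the simple symmetric random walk `S_k = X_0 + ⋯ + X_{k-1}` with
i.i.d. increments uniform on `{-1,+1}`, there is a finite constant `c` such that for
every `n` and every event `A` measurable w.r.t. `(S_0, …, S_{n+1})`,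
`P(A ∩ {S_{2n+1} = -1}) ≤ c · P(A) · P(S_{2n+1} = -1)`, i.e. `P(A | S_{2n+1}=-1) ≤ c P(A)`. -/
theorem bridge_conditioning_bound
    {Ω : Type*} [MeasurableSpace Ω] (μ : Measure Ω) [IsProbabilityMeasure μ]
    (X : ℕ → Ω → ℤ) (hmeas : ∀ i, Measurable (X i))
    (hindep : iIndepFun X μ)
    (hup : ∀ i, μ {ω | X i ω = 1} = 1/2)
    (hdown : ∀ i, μ {ω | X i ω = -1} = 1/2) :
    ∃ c : ENNReal, c ≠ ⊤ ∧ ∀ n : ℕ, ∀ A : Set Ω,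
      MeasurableSet[MeasurableSpace.comap
        (fun ω => fun k : Fin (n + 2) => ∑ m ∈ Finset.range k, X m ω)
        MeasurableSpace.pi] A →
      μ (A ∩ {ω | (∑ m ∈ Finset.range (2 * n + 1), X m ω) = -1})
        ≤ c * μ A * μ {ω | (∑ m ∈ Finset.range (2 * n + 1), X m ω) = -1} := by
  classical
  refine ⟨2, by norm_num, ?_⟩
  intro n A hA
  set s₁ : Finset ℕ := Finset.range (n+1) with hs₁
  set s₂ : Finset ℕ := Finset.Ico (n+1) (2*n+1) with hs₂
  have hcard₂ : s₂.card = n := by rw [hs₂, Nat.card_Ico]; omega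
  have hsplit : ∀ ω, (∑ m ∈ Finset.range (2*n+1), X m ω)
      = (∑ i ∈ s₁, X i ω) + (∑ i ∈ s₂, X i ω) := by
    intro ω
    rw [hs₁, hs₂, Finset.range_eq_Ico, Finset.range_eq_Ico]
    exact (Finset.sum_Ico_consecutive (fun i => X i ω) (show 0 ≤ n+1 by omega) (show n+1 ≤ 2*n+1 by omega)).symm
  set B : Set Ω := {ω | (∑ m ∈ Finset.range (2*n+1), X m ω) = -1} with hB
  -- independence of the two blocks
  have h_le : ∀ i : ℕ,
      (MeasurableSpace.comap (X i) inferInstance) ≤ (inferInstance : MeasurableSpace Ω) :=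
    fun i => (hmeas i).comap_le
  have hdisjS : Disjoint (↑s₁ : Set ℕ) (↑s₂ : Set ℕ) := by
    rw [Finset.disjoint_coe]
    rw [Finset.disjoint_left]
    intro a ha ha'
    rw [hs₁, Finset.mem_range] at ha
    rw [hs₂, Finset.mem_Ico] at ha'
    omega
  have hInd := indep_iSup_of_disjoint h_le hindep.iIndep hdisjS
  have hXm : ∀ (s : Finset ℕ) (i : ℕ), i ∈ s →
      Measurable[⨆ j ∈ (↑s : Set ℕ), MeasurableSpace.comap (X j) inferInstance] (X i) := by
    intro s i hi
    rw [measurable_iff_comap_le]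
    exact le_iSup₂ (f := fun (j : ℕ) (_ : j ∈ (↑s : Set ℕ)) =>
      MeasurableSpace.comap (X j) inferInstance) i (Finset.mem_coe.mpr hi)
  have hsum₁ : Measurable[⨆ i ∈ (↑s₁ : Set ℕ), MeasurableSpace.comap (X i) inferInstance]
      (fun ω => ∑ i ∈ s₁, X i ω) :=
    Finset.measurable_sum _ (fun i hi => hXm s₁ i hi)
  have hsum₂ : Measurable[⨆ i ∈ (↑s₂ : Set ℕ), MeasurableSpace.comap (X i) inferInstance]
      (fun ω => ∑ i ∈ s₂, X i ω) :=
    Finset.measurable_sum _ (fun i hi => hXm s₂ i hi)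
  have hψle : MeasurableSpace.comap
      (fun ω => fun k : Fin (n + 2) => ∑ m ∈ Finset.range k, X m ω) MeasurableSpace.pi
      ≤ ⨆ i ∈ (↑s₁ : Set ℕ), MeasurableSpace.comap (X i) inferInstance := by
    rw [MeasurableSpace.pi, MeasurableSpace.comap_iSup]
    refine iSup_le fun k => ?_
    rw [MeasurableSpace.comap_comp]
    have hsum : Measurable[⨆ i ∈ (↑s₁ : Set ℕ), MeasurableSpace.comap (X i) inferInstance]
        ((fun v : Fin (n+2) → ℤ => v k) ∘
          (fun ω => fun k : Fin (n + 2) => ∑ m ∈ Finset.range k, X m ω)) := by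
      have : ((fun v : Fin (n+2) → ℤ => v k) ∘
          (fun ω => fun k : Fin (n + 2) => ∑ m ∈ Finset.range k, X m ω))
          = fun ω => ∑ m ∈ Finset.range (k : ℕ), X m ω := rfl
      rw [this]
      refine Finset.measurable_sum _ (fun i hi => ?_)
      refine hXm s₁ i ?_
      rw [hs₁, Finset.mem_range]
      have h1 := Finset.mem_range.mp hi
      have h2 := k.isLt
      omega
    exact hsum.comap_le
  have hAm₁ : MeasurableSet[⨆ i ∈ (↑s₁ : Set ℕ), MeasurableSpace.comap (X i) inferInstance] A :=
    hψle _ hA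
  have hψ0 : Measurable (fun ω => fun k : Fin (n + 2) => ∑ m ∈ Finset.range k, X m ω) :=
    measurable_pi_lambda _ (fun k => Finset.measurable_sum _ (fun i _ => hmeas i))
  have hA0 : MeasurableSet A := hψ0.comap_le _ hA
  set D : ℤ → Set Ω := fun j => {ω | (∑ i ∈ s₁, X i ω) = j} with hD
  set C : ℤ → Set Ω := fun j => {ω | (∑ i ∈ s₂, X i ω) = -1 - j} with hC
  have hDm₁ : ∀ j, MeasurableSet[⨆ i ∈ (↑s₁ : Set ℕ),
      MeasurableSpace.comap (X i) inferInstance] (D j) :=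
    fun j => hsum₁ (measurableSet_singleton j)
  have hCm₂ : ∀ j, MeasurableSet[⨆ i ∈ (↑s₂ : Set ℕ),
      MeasurableSpace.comap (X i) inferInstance] (C j) :=
    fun j => hsum₂ (measurableSet_singleton (-1 - j))
  have hD0 : ∀ j, MeasurableSet (D j) :=
    fun j => (Finset.measurable_sum _ (fun i _ => hmeas i)) (measurableSet_singleton j)
  have hC0 : ∀ j, MeasurableSet (C j) :=
    fun j => (Finset.measurable_sum _ (fun i _ => hmeas i)) (measurableSet_singleton (-1-j))
  have hprod : ∀ j, μ ((A ∩ D j) ∩ C j) = μ (A ∩ D j) * μ (C j) := by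
    intro j
    exact (Indep_iff _ _ μ).mp hInd _ _ (hAm₁.inter (hDm₁ j)) (hCm₂ j)
  have hdecomp : A ∩ B = ⋃ j : ℤ, ((A ∩ D j) ∩ C j) := by
    ext ω
    simp only [hB, hD, hC, Set.mem_inter_iff, Set.mem_iUnion, Set.mem_setOf_eq]
    constructor
    · rintro ⟨hA', hB'⟩
      refine ⟨∑ i ∈ s₁, X i ω, ⟨hA', rfl⟩, ?_⟩
      have := hsplit ω
      omega
    · rintro ⟨j, ⟨hA', hD'⟩, hC'⟩
      refine ⟨hA', ?_⟩
      have := hsplit ω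
      omega
  have hdisjU : Pairwise (Function.onFun Disjoint fun j => (A ∩ D j) ∩ C j) := by
    intro j j' hne
    rw [Function.onFun, Set.disjoint_left]
    intro ω h h'
    exact hne (h.1.2.symm.trans h'.1.2)
  have hmeasU : ∀ j : ℤ, MeasurableSet ((A ∩ D j) ∩ C j) :=
    fun j => (hA0.inter (hD0 j)).inter (hC0 j)
  set M : ENNReal := (Nat.choose n (n/2) : ENNReal) * (2:ENNReal)⁻¹ ^ n with hM
  have hupperC : ∀ j, μ (C j) ≤ M := by
    intro j
    have := rw_upper μ X hmeas hindep hup hdown s₂ (-1 - j)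
    rw [hcard₂] at this
    exact this
  have hstep1 : μ (A ∩ B) ≤ μ A * M := by
    calc μ (A ∩ B) = ∑' j : ℤ, μ ((A ∩ D j) ∩ C j) := by
          rw [hdecomp]; exact measure_iUnion hdisjU hmeasU
      _ = ∑' j : ℤ, μ (A ∩ D j) * μ (C j) := by
          exact tsum_congr hprod
      _ ≤ ∑' j : ℤ, μ (A ∩ D j) * M :=
          ENNReal.tsum_le_tsum (fun j => mul_le_mul_right (hupperC j) _)
      _ = (∑' j : ℤ, μ (A ∩ D j)) * M := ENNReal.tsum_mul_right
      _ = μ A * M := by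
          congr 1
          have hU : (⋃ j : ℤ, A ∩ D j) = A := by
            ext ω
            simp only [Set.mem_iUnion, Set.mem_inter_iff, hD, Set.mem_setOf_eq]
            constructor
            · rintro ⟨j, hj, _⟩; exact hj
            · intro h; exact ⟨∑ i ∈ s₁, X i ω, h, rfl⟩
          have hdisj2 : Pairwise (Function.onFun Disjoint fun j : ℤ => A ∩ D j) := by
            intro j j' hne
            rw [Function.onFun, Set.disjoint_left]
            intro ω h h'
            exact hne (h.2.symm.trans h'.2)
          have h2 := measure_iUnion (μ := μ) hdisj2 (fun j => hA0.inter (hD0 j))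
          rw [hU] at h2
          exact h2.symm
  -- lower bound for μ B
  have hBlow : (Nat.choose (2*n+1) n : ENNReal) * (2:ENNReal)⁻¹ ^ (2*n+1) ≤ μ B := by
    have hlow := rw_lower μ X hmeas hindep hup hdown (Finset.range (2*n+1)) n
    rw [Finset.card_range] at hlow
    refine hlow.trans (measure_mono ?_)
    intro ω hω
    simp only [hB, Set.mem_setOf_eq] at hω ⊢
    omega
  -- combinatorial comparison
  have hkey : ((2:ENNReal))^n * (Nat.choose n (n/2) : ENNReal)
      ≤ (Nat.choose (2*n+1) n : ENNReal) := by
    have h := bcb_key n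
    calc (2:ENNReal)^n * (Nat.choose n (n/2) : ENNReal)
        = ((2^n * Nat.choose n (n/2) : ℕ) : ENNReal) := by push_cast; ring
      _ ≤ ((Nat.choose (2*n+1) n : ℕ) : ENNReal) := Nat.cast_le.mpr h
  have hcan : (2:ENNReal)^n * (2:ENNReal)⁻¹^n = 1 := by
    rw [← mul_pow, ENNReal.mul_inv_cancel (by norm_num) (by norm_num), one_pow]
  have hcan' : (2:ENNReal)⁻¹ * 2 = 1 :=
    ENNReal.inv_mul_cancel (by norm_num) (by norm_num)
  have hMB : M ≤ 2 * μ B := by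
    have c1 : M = ((2:ENNReal)^n * (Nat.choose n (n/2) : ENNReal)) * (2:ENNReal)⁻¹^(2*n) := by
      rw [hM, two_mul, pow_add]
      calc (Nat.choose n (n/2) : ENNReal) * (2:ENNReal)⁻¹ ^ n
          = ((2:ENNReal)^n * (2:ENNReal)⁻¹^n) * ((Nat.choose n (n/2) : ENNReal) * (2:ENNReal)⁻¹ ^ n) := by
            rw [hcan, one_mul]
        _ = ((2:ENNReal)^n * (Nat.choose n (n/2) : ENNReal)) * ((2:ENNReal)⁻¹^n * (2:ENNReal)⁻¹^n) := by
            ring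
    have c2 : (2:ENNReal)⁻¹^(2*n) = 2 * (2:ENNReal)⁻¹^(2*n+1) := by
      rw [pow_succ]
      calc (2:ENNReal)⁻¹^(2*n) = (2:ENNReal)⁻¹^(2*n) * ((2:ENNReal)⁻¹ * 2) := by
            rw [hcan', mul_one]
        _ = (2:ENNReal)⁻¹ ^ (2*n) * (2:ENNReal)⁻¹ * 2 := by ring
        _ = 2 * ((2:ENNReal)⁻¹ ^ (2*n) * (2:ENNReal)⁻¹) := by ring
    calc M = ((2:ENNReal)^n * (Nat.choose n (n/2) : ENNReal)) * (2:ENNReal)⁻¹^(2*n) := c1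
      _ ≤ (Nat.choose (2*n+1) n : ENNReal) * (2:ENNReal)⁻¹^(2*n) := mul_le_mul_left hkey _
      _ = 2 * ((Nat.choose (2*n+1) n : ENNReal) * (2:ENNReal)⁻¹^(2*n+1)) := by
          rw [c2]; ring
      _ ≤ 2 * μ B := mul_le_mul_right hBlow _
  calc μ (A ∩ B) ≤ μ A * M := hstep1
    _ ≤ μ A * (2 * μ B) := mul_le_mul_right hMB _
    _ = 2 * μ A * μ B := by ring
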